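/- Weyl-based lower bound for factor analysis: Let Σ be a symmetric p×p matrix and let u ∈ ℝ^p satisfy φ ≤ u (entrywise) for every φ ∈ F_Σ, where F_Σ = {φ ∈ ℝ^p : φ ≥ 0, Σ − diag(φ) ⪰ 0}. Then for any 0 ≤ r < p, inf_{φ ∈ F_Σ} Σ_{i>r} λᵢ(Σ − diag(φ)) ≥ Σ_{i>r} max{λᵢ(Σ − diag(u)), 0}, where λ₁ ≥ ... ≥ λ_p are sorted eigenvalues. -/

import Mathlib

open Matrix

/-- The eigenvalues of a real symmetric matrix, sorted in decreasing order. -/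
noncomputable def sortedEig {p : ℕ} {A : Matrix (Fin p) (Fin p) ℝ}
    (hA : A.IsHermitian) : Fin p → ℝ :=
  fun i => hA.eigenvalues (Tuple.sort hA.eigenvalues i.rev)

section Aux

variable {p : ℕ}

local notation "⟪" x ", " y "⟫" => @inner ℝ _ _ x y

private lemma inner_eq_dot' (x y : EuclideanSpace ℝ (Fin p)) :
    ⟪x, y⟫ = (x : Fin p → ℝ) ⬝ᵥ (y : Fin p → ℝ) := by
  simp [PiLp.inner_apply, dotProduct, RCLike.inner_apply, mul_comm]

private lemma quad_eq_sum' {A : Matrix (Fin p) (Fin p) ℝ} (hA : A.IsHermitian)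
    (x : EuclideanSpace ℝ (Fin p)) :
    ⟪x, (WithLp.toLp 2 (A *ᵥ x : Fin p → ℝ) : EuclideanSpace ℝ (Fin p))⟫ =
      ∑ j, hA.eigenvalues j * ⟪hA.eigenvectorBasis j, x⟫ ^ 2 := by
  set b := hA.eigenvectorBasis with hb
  have hAT : Aᵀ = A := by
    have := hA; rwa [IsHermitian, conjTranspose_eq_transpose_of_trivial] at this
  have key : ∀ j, ⟪b j, (WithLp.toLp 2 (A *ᵥ x : Fin p → ℝ) : EuclideanSpace ℝ (Fin p))⟫ =
      hA.eigenvalues j * ⟪b j, x⟫ := by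
    intro j
    rw [inner_eq_dot', dotProduct_mulVec, show ((b j : Fin p → ℝ)) ᵥ* A = A *ᵥ (b j : Fin p → ℝ) by
      rw [← hAT, mulVec_transpose, hAT]]
    erw [hA.mulVec_eigenvectorBasis]
    rw [inner_eq_dot']
    simp only [smul_dotProduct, smul_eq_mul]
    exact congrArg (fun v => hA.eigenvalues j * (v ⬝ᵥ x)) rfl
  calc ⟪x, (WithLp.toLp 2 (A *ᵥ x : Fin p → ℝ) : EuclideanSpace ℝ (Fin p))⟫
      = ∑ j, ⟪x, b j⟫ * ⟪b j, (WithLp.toLp 2 (A *ᵥ x : Fin p → ℝ) : EuclideanSpace ℝ (Fin p))⟫ :=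
        (b.sum_inner_mul_inner x _).symm
    _ = ∑ j, hA.eigenvalues j * ⟪b j, x⟫ ^ 2 := by
        refine Finset.sum_congr rfl fun j _ => ?_
        rw [key j, real_inner_comm x (b j)]; ring

private lemma normsq_eq_sum' (b : OrthonormalBasis (Fin p) ℝ (EuclideanSpace ℝ (Fin p)))
    (x : EuclideanSpace ℝ (Fin p)) : ⟪x, x⟫ = ∑ j, ⟪b j, x⟫ ^ 2 := by
  rw [← b.sum_inner_mul_inner x x]
  refine Finset.sum_congr rfl fun j _ => ?_
  rw [real_inner_comm x (b j)]; ring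

private lemma span_inner_zero' (b : OrthonormalBasis (Fin p) ℝ (EuclideanSpace ℝ (Fin p)))
    (S : Finset (Fin p)) {x : EuclideanSpace ℝ (Fin p)}
    (hx : x ∈ Submodule.span ℝ (b '' S)) {j : Fin p} (hj : j ∉ S) :
    ⟪b j, x⟫ = 0 := by
  induction hx using Submodule.span_induction with
  | mem y hy =>
      obtain ⟨k, hk, rfl⟩ := hy
      exact b.orthonormal.2 (fun h => hj (h ▸ hk))
  | zero => exact inner_zero_right _
  | add y z _ _ hy hz => rw [inner_add_right, hy, hz, add_zero]
  | smul c y _ hy => rw [inner_smul_right, hy, mul_zero]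

private lemma finrank_span_basis_image'
    (b : OrthonormalBasis (Fin p) ℝ (EuclideanSpace ℝ (Fin p))) (S : Finset (Fin p)) :
    Module.finrank ℝ (Submodule.span ℝ (b '' S) : Submodule ℝ (EuclideanSpace ℝ (Fin p)))
      = S.card := by
  have hli : LinearIndependent ℝ (fun j : S => b j) :=
    b.orthonormal.linearIndependent.comp _ Subtype.val_injective
  have : (b '' S) = Set.range (fun j : S => b j) := by
    ext y; simp [Set.mem_image, Set.mem_range]
  rw [this, finrank_span_eq_card hli, Fintype.card_coe]

private lemma quad_le_on_span' {A : Matrix (Fin p) (Fin p) ℝ} (hA : A.IsHermitian)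
    (S : Finset (Fin p)) (c : ℝ) (hc : ∀ j ∈ S, hA.eigenvalues j ≤ c)
    {x : EuclideanSpace ℝ (Fin p)} (hx : x ∈ Submodule.span ℝ (hA.eigenvectorBasis '' S)) :
    ⟪x, (WithLp.toLp 2 (A *ᵥ x : Fin p → ℝ) : EuclideanSpace ℝ (Fin p))⟫ ≤ c * ⟪x, x⟫ := by
  rw [quad_eq_sum' hA, normsq_eq_sum' hA.eigenvectorBasis, Finset.mul_sum]
  refine Finset.sum_le_sum fun j _ => ?_
  by_cases hj : j ∈ S
  · exact mul_le_mul_of_nonneg_right (hc j hj) (sq_nonneg _)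
  · rw [span_inner_zero' _ S hx hj]; simp

private lemma quad_ge_on_span' {A : Matrix (Fin p) (Fin p) ℝ} (hA : A.IsHermitian)
    (S : Finset (Fin p)) (c : ℝ) (hc : ∀ j ∈ S, c ≤ hA.eigenvalues j)
    {x : EuclideanSpace ℝ (Fin p)} (hx : x ∈ Submodule.span ℝ (hA.eigenvectorBasis '' S)) :
    c * ⟪x, x⟫ ≤ ⟪x, (WithLp.toLp 2 (A *ᵥ x : Fin p → ℝ) : EuclideanSpace ℝ (Fin p))⟫ := by
  rw [quad_eq_sum' hA, normsq_eq_sum' hA.eigenvectorBasis, Finset.mul_sum]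
  refine Finset.sum_le_sum fun j _ => ?_
  by_cases hj : j ∈ S
  · exact mul_le_mul_of_nonneg_right (hc j hj) (sq_nonneg _)
  · rw [span_inner_zero' _ S hx hj]; simp

/-- Courant–Fischer (one direction). -/
private lemma courant_le_sortedEig' {A : Matrix (Fin p) (Fin p) ℝ} (hA : A.IsHermitian)
    (i : Fin p) (W : Submodule ℝ (EuclideanSpace ℝ (Fin p)))
    (hW : (i : ℕ) + 1 ≤ Module.finrank ℝ W) (c : ℝ)
    (hc : ∀ x ∈ W, c * ⟪x, x⟫ ≤ ⟪x, (WithLp.toLp 2 (A *ᵥ x : Fin p → ℝ) : EuclideanSpace ℝ (Fin p))⟫) :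
    c ≤ sortedEig hA i := by
  classical
  set σ := Tuple.sort hA.eigenvalues with hσ
  set S : Finset (Fin p) := (Finset.Iic i.rev).image σ with hS
  have hcard : S.card = p - i := by
    rw [hS, Finset.card_image_of_injective _ σ.injective, Fin.card_Iic, Fin.val_rev]
    omega
  set V := Submodule.span ℝ (hA.eigenvectorBasis '' S) with hV
  have hVrank : Module.finrank ℝ V = p - i := by
    rw [hV, finrank_span_basis_image', hcard]
  have hsum := Submodule.finrank_sup_add_finrank_inf_eq W V
  have hle : Module.finrank ℝ (W ⊔ V : Submodule ℝ (EuclideanSpace ℝ (Fin p))) ≤ p := by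
    simpa [finrank_euclideanSpace] using
      (Submodule.finrank_le (W ⊔ V : Submodule ℝ (EuclideanSpace ℝ (Fin p))))
  have hpos : 0 < Module.finrank ℝ (W ⊓ V : Submodule ℝ (EuclideanSpace ℝ (Fin p))) := by
    omega
  have hne : (W ⊓ V : Submodule ℝ (EuclideanSpace ℝ (Fin p))) ≠ ⊥ := by
    intro h; rw [h, finrank_bot] at hpos; omega
  obtain ⟨x, hxWV, hxne⟩ := Submodule.exists_mem_ne_zero_of_ne_bot hne
  have hxW : x ∈ W := hxWV.1
  have hxV : x ∈ V := hxWV.2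
  have hub : ⟪x, (WithLp.toLp 2 (A *ᵥ x : Fin p → ℝ) : EuclideanSpace ℝ (Fin p))⟫ ≤ sortedEig hA i * ⟪x, x⟫ := by
    refine quad_le_on_span' hA S _ ?_ hxV
    intro j hj
    rw [hS] at hj
    obtain ⟨k, hk, rfl⟩ := Finset.mem_image.1 hj
    exact Tuple.monotone_sort hA.eigenvalues (Finset.mem_Iic.1 hk)
  have hxx : (0:ℝ) < ⟪x, x⟫ := by
    rcases lt_or_eq_of_le (real_inner_self_nonneg (x := x)) with h | h
    · exact h
    · exact absurd (real_inner_self_nonpos.1 h.symm.le) hxne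
  have := le_trans (hc x hxW) hub
  exact le_of_mul_le_mul_right (by linarith [this]) hxx

/-- Weyl monotonicity: if `A - B ⪰ 0` then `λᵢ(B) ≤ λᵢ(A)` for sorted eigenvalues. -/
private lemma weyl_mono' {A B : Matrix (Fin p) (Fin p) ℝ} (hA : A.IsHermitian)
    (hB : B.IsHermitian) (hAB : (A - B).PosSemidef) (i : Fin p) :
    sortedEig hB i ≤ sortedEig hA i := by
  classical
  set σ := Tuple.sort hB.eigenvalues with hσ
  set T : Finset (Fin p) := (Finset.Ici i.rev).image σ with hT
  set W := Submodule.span ℝ (hB.eigenvectorBasis '' T) with hW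
  have hcard : T.card = (i : ℕ) + 1 := by
    rw [hT, Finset.card_image_of_injective _ σ.injective, Fin.card_Ici, Fin.val_rev]
    omega
  refine courant_le_sortedEig' hA i W ?_ _ ?_
  · rw [hW, finrank_span_basis_image', hcard]
  · intro x hx
    have h1 : sortedEig hB i * ⟪x, x⟫ ≤
        ⟪x, (WithLp.toLp 2 (B *ᵥ x : Fin p → ℝ) : EuclideanSpace ℝ (Fin p))⟫ := by
      refine quad_ge_on_span' hB T _ ?_ hx
      intro j hj
      obtain ⟨k, hk, rfl⟩ := Finset.mem_image.1 hj
      exact Tuple.monotone_sort hB.eigenvalues (Finset.mem_Ici.1 hk)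
    have h2 : (0:ℝ) ≤ ⟪x, (WithLp.toLp 2 (A *ᵥ x : Fin p → ℝ) : EuclideanSpace ℝ (Fin p))⟫ -
        ⟪x, (WithLp.toLp 2 (B *ᵥ x : Fin p → ℝ) : EuclideanSpace ℝ (Fin p))⟫ := by
      have := hAB.dotProduct_mulVec_nonneg (x : Fin p → ℝ)
      rw [sub_mulVec] at this
      rw [inner_eq_dot', inner_eq_dot']
      simpa [dotProduct_sub] using this
    linarith

end Aux

/-- Weyl-based lower bound for factor analysis: if `u` is an entrywise upper
bound on the feasible set `F_Σ = {φ ≥ 0 : Σ - diag(φ) ⪰ 0}`, then for every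
`φ ∈ F_Σ` and `0 ≤ r < p`, the sum of the `p - r` smallest eigenvalues of
`Σ - diag(φ)` is at least `∑_{i > r} max{λᵢ(Σ - diag(u)), 0}`. -/
theorem weyl_fa_lower_bound {p : ℕ} (r : ℕ) (hr : r < p)
    (Sig : Matrix (Fin p) (Fin p) ℝ) (hSig : Sig.IsHermitian) (u : Fin p → ℝ)
    (hub : ∀ φ : Fin p → ℝ, (∀ i, 0 ≤ φ i) →
      (Sig - Matrix.diagonal φ).PosSemidef → ∀ i, φ i ≤ u i) :
    ∀ (φ : Fin p → ℝ), (∀ i, 0 ≤ φ i) →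
      ∀ hpsd : (Sig - Matrix.diagonal φ).PosSemidef,
      ∑ i ∈ Finset.univ.filter (fun i : Fin p => r ≤ (i : ℕ)),
          max (sortedEig (hSig.sub (Matrix.isHermitian_diagonal u)) i) 0 ≤
        ∑ i ∈ Finset.univ.filter (fun i : Fin p => r ≤ (i : ℕ)), sortedEig hpsd.1 i := by
  intro φ hφ hpsd
  have hBher : (Sig - Matrix.diagonal u).IsHermitian :=
    hSig.sub (Matrix.isHermitian_diagonal u)
  have hdiff : (Sig - Matrix.diagonal φ) - (Sig - Matrix.diagonal u)
      = Matrix.diagonal (fun i => u i - φ i) := by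
    rw [← diagonal_sub]; abel
  have hAB : ((Sig - Matrix.diagonal φ) - (Sig - Matrix.diagonal u)).PosSemidef := by
    rw [hdiff]
    exact posSemidef_diagonal_iff.mpr fun i => sub_nonneg.2 (hub φ hφ hpsd i)
  refine Finset.sum_le_sum fun i _ => ?_
  exact max_le (weyl_mono' hpsd.1 hBher hAB i) (hpsd.eigenvalues_nonneg _)
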